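/- Let k, d ≥ 1. Let v₁, v₂ ∈ ℂᵏ be orthonormal, let W be a k×k complex unitary matrix with W·v₁ = v₂ and W·v₂ = v₁, and let σ₁, σ₂ be d×d density matrices. Define ρ = ½·(v₁v₁ᴴ ⊗ σ₁) + ½·(v₂v₂ᴴ ⊗ σ₂), where ⊗ is the Kronecker product and v·vᴴ the rank-one matrix with entries v(x)·conj(v(y)). Then ‖ρ − (W ⊗ I)·ρ·(W ⊗ I)ᴴ‖₁ = ‖σ₁ − σ₂‖₁. -/

import Mathlib

open Matrix
open scoped ComplexOrder Classical Kronecker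
set_option maxRecDepth 8000

/-- The positive semidefinite square root of a matrix (junk value `0` when the
matrix is not positive semidefinite). -/
noncomputable def msqrt {m : Type*} [Fintype m] [DecidableEq m]
    (M : Matrix m m ℂ) : Matrix m m ℂ :=
  if h : M.PosSemidef then (h.1.eigenvectorUnitary : Matrix m m ℂ) *
    diagonal ((↑) ∘ Real.sqrt ∘ h.1.eigenvalues) * (star h.1.eigenvectorUnitary : Matrix m m ℂ)
  else 0

/-- The trace norm `‖M‖₁ = Tr √(Mᴴ M)`. -/
noncomputable def traceNorm {m : Type*} [Fintype m] [DecidableEq m]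
    (M : Matrix m m ℂ) : ℝ :=
  ((msqrt (Mᴴ * M)).trace).re

section
open scoped MatrixOrder
lemma msqrt_eq_cfc {m : Type*} [Fintype m] [DecidableEq m] {M : Matrix m m ℂ}
    (hM : M.PosSemidef) : msqrt M = CFC.sqrt M := by
  rw [msqrt, dif_pos hM, CFC.sqrt_eq_cfc, cfc_nnreal_eq_real _ M, hM.1.cfc_eq]
  simp only [IsHermitian.cfc, Unitary.conjStarAlgAut_apply, Real.coe_sqrt, Real.coe_toNNReal']
  congr 3
  funext i
  simp [hM.eigenvalues_nonneg i]

lemma msqrt_psd {m : Type*} [Fintype m] [DecidableEq m] {M : Matrix m m ℂ}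
    (hM : M.PosSemidef) : (msqrt M).PosSemidef := by
  rw [msqrt_eq_cfc hM, ← nonneg_iff_posSemidef]; exact CFC.sqrt_nonneg M

lemma msqrt_mul_self {m : Type*} [Fintype m] [DecidableEq m] {M : Matrix m m ℂ}
    (hM : M.PosSemidef) : msqrt M * msqrt M = M := by
  rw [msqrt_eq_cfc hM]; exact CFC.sqrt_mul_sqrt_self M hM.nonneg

lemma msqrt_unique {m : Type*} [Fintype m] [DecidableEq m] {R M : Matrix m m ℂ}
    (hR : R.PosSemidef) (hM : M.PosSemidef) (h : R ^ 2 = M) : msqrt M = R := by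
  rw [msqrt_eq_cfc hM, ← h, pow_two]; exact CFC.sqrt_mul_self R hR.nonneg
end

lemma kron_conjT {m n : Type*} [Fintype m] [Fintype n] (A : Matrix m m ℂ) (B : Matrix n n ℂ) :
    (A ⊗ₖ B)ᴴ = Aᴴ ⊗ₖ Bᴴ := by
  ext ⟨i,j⟩ ⟨p,q⟩
  simp [conjTranspose_apply, mul_comm]


lemma sub_kron {m n : Type*} (A B : Matrix m m ℂ) (C : Matrix n n ℂ) :
    (A - B) ⊗ₖ C = A ⊗ₖ C - B ⊗ₖ C := by
  ext ⟨i,j⟩ ⟨p,q⟩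
  simp [sub_mul]

lemma kron_sub {m n : Type*} (A : Matrix m m ℂ) (B C : Matrix n n ℂ) :
    A ⊗ₖ (B - C) = A ⊗ₖ B - A ⊗ₖ C := by
  ext ⟨i,j⟩ ⟨p,q⟩
  simp [mul_sub]

lemma psd_kron {m n : Type*} [Fintype m] [Fintype n] [DecidableEq m] [DecidableEq n]
    {A : Matrix m m ℂ} {B : Matrix n n ℂ} (hA : A.PosSemidef) (hB : B.PosSemidef) :
    (A ⊗ₖ B).PosSemidef := by
  exact hA.kronecker hB

lemma psd_half {n : Type*} [Fintype n] {A : Matrix n n ℂ} (hA : A.PosSemidef) :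
    (((1:ℂ)/2) • A).PosSemidef := by
  refine Matrix.PosSemidef.of_dotProduct_mulVec_nonneg ?_ ?_
  · unfold Matrix.IsHermitian
    rw [conjTranspose_smul, hA.1.eq]
    norm_num
  · intro x
    rw [smul_mulVec, dotProduct_smul]
    have h2 : (0:ℂ) ≤ (1:ℂ)/2 := by rw [Complex.le_def]; norm_num
    have := hA.dotProduct_mulVec_nonneg x
    calc (0:ℂ) = ((1:ℂ)/2) * 0 := by ring
    _ ≤ ((1:ℂ)/2) * (star x ⬝ᵥ A *ᵥ x) := mul_le_mul_of_nonneg_left this h2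
    _ = ((1:ℂ)/2) • (star x ⬝ᵥ A *ᵥ x) := rfl


lemma psd_rankOne {k : ℕ} (v : Fin k → ℂ) :
    (Matrix.of fun x y => v x * (starRingEnd ℂ) (v y) : Matrix (Fin k) (Fin k) ℂ).PosSemidef := by
  refine Matrix.PosSemidef.of_dotProduct_mulVec_nonneg ?_ ?_
  · unfold Matrix.IsHermitian
    ext x y
    rw [Matrix.conjTranspose_apply, Matrix.of_apply, Matrix.of_apply, starRingEnd_apply,
      starRingEnd_apply, star_mul', star_star]
    exact mul_comm _ _
  · intro x
    have hval : star x ⬝ᵥ (Matrix.of fun a b => v a * (starRingEnd ℂ) (v b)) *ᵥ x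
        = (∑ a, star (x a) * v a) * star (∑ a, star (x a) * v a) := by
      have hsc : star (∑ a, star (x a) * v a) = ∑ b, (starRingEnd ℂ) (v b) * x b := by
        rw [star_sum]
        exact Finset.sum_congr rfl fun b _ => by
          rw [star_mul', star_star, starRingEnd_apply]; ring
      rw [hsc]
      simp only [dotProduct, Matrix.mulVec, Matrix.of_apply, Pi.star_apply]
      rw [Finset.sum_mul_sum]
      refine Finset.sum_congr rfl fun a _ => ?_
      rw [Finset.mul_sum]
      exact Finset.sum_congr rfl fun b _ => by ring
    rw [hval]
    exact mul_star_self_nonneg _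

/-- the label-register construction preserves trace distance:
`‖ρ − (W ⊗ I) ρ (W ⊗ I)ᴴ‖₁ = ‖σ₁ − σ₂‖₁`. -/
theorem label_register_trace_distance
    {k d : ℕ} (hk : 1 ≤ k) (hd : 1 ≤ d)
    (v₁ v₂ : Fin k → ℂ)
    (hv₁ : ∑ x, (starRingEnd ℂ) (v₁ x) * v₁ x = 1)
    (hv₂ : ∑ x, (starRingEnd ℂ) (v₂ x) * v₂ x = 1)
    (horth : ∑ x, (starRingEnd ℂ) (v₁ x) * v₂ x = 0)
    (W : Matrix (Fin k) (Fin k) ℂ) (hW : W ∈ Matrix.unitaryGroup (Fin k) ℂ)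
    (hWv₁ : W.mulVec v₁ = v₂) (hWv₂ : W.mulVec v₂ = v₁)
    (σ₁ σ₂ : Matrix (Fin d) (Fin d) ℂ)
    (hσ₁ : σ₁.PosSemidef) (hσ₁tr : σ₁.trace = 1)
    (hσ₂ : σ₂.PosSemidef) (hσ₂tr : σ₂.trace = 1) :
    traceNorm
      ((((1 : ℂ) / 2) • ((Matrix.of fun x y => v₁ x * (starRingEnd ℂ) (v₁ y)) ⊗ₖ σ₁) +
        ((1 : ℂ) / 2) • ((Matrix.of fun x y => v₂ x * (starRingEnd ℂ) (v₂ y)) ⊗ₖ σ₂)) -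
       (W ⊗ₖ (1 : Matrix (Fin d) (Fin d) ℂ)) *
        (((1 : ℂ) / 2) • ((Matrix.of fun x y => v₁ x * (starRingEnd ℂ) (v₁ y)) ⊗ₖ σ₁) +
          ((1 : ℂ) / 2) • ((Matrix.of fun x y => v₂ x * (starRingEnd ℂ) (v₂ y)) ⊗ₖ σ₂)) *
        (W ⊗ₖ (1 : Matrix (Fin d) (Fin d) ℂ))ᴴ)
      = traceNorm (σ₁ - σ₂) := by
  classical
  set P₁ : Matrix (Fin k) (Fin k) ℂ := Matrix.of fun x y => v₁ x * (starRingEnd ℂ) (v₁ y) with hP₁def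
  set P₂ : Matrix (Fin k) (Fin k) ℂ := Matrix.of fun x y => v₂ x * (starRingEnd ℂ) (v₂ y) with hP₂def
  set S : Matrix (Fin d) (Fin d) ℂ := σ₁ - σ₂ with hSdef
  -- general product of rank-one matrices
  have prod : ∀ (v w : Fin k → ℂ),
      (Matrix.of fun x y => v x * (starRingEnd ℂ) (v y)) *
        (Matrix.of fun x y => w x * (starRingEnd ℂ) (w y))
        = (∑ z, (starRingEnd ℂ) (v z) * w z) •
          (Matrix.of fun x y => v x * (starRingEnd ℂ) (w y)) := by
    intro v w
    ext x y
    simp only [mul_apply, Matrix.of_apply, Matrix.smul_apply, smul_eq_mul]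
    rw [Finset.sum_mul]
    exact Finset.sum_congr rfl fun z _ => by ring
  -- conjugation by W of a rank-one projector
  have conjW : ∀ (v : Fin k → ℂ),
      W * (Matrix.of fun x y => v x * (starRingEnd ℂ) (v y)) * Wᴴ
        = Matrix.of fun x y => (W *ᵥ v) x * (starRingEnd ℂ) ((W *ᵥ v) y) := by
    intro v
    ext x y
    simp only [mul_apply, conjTranspose_apply, Matrix.of_apply]
    calc ∑ b, (∑ a, W x a * (v a * (starRingEnd ℂ) (v b))) * star (W y b)
        = ∑ b, ((∑ a, W x a * v a) * (starRingEnd ℂ) (v b)) * star (W y b) := by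
          refine Finset.sum_congr rfl fun b _ => ?_
          simp only [Finset.sum_mul]
          exact Finset.sum_congr rfl fun a _ => by ring
      _ = (∑ a, W x a * v a) * (starRingEnd ℂ) (∑ b, W y b * v b) := by
          rw [map_sum, Finset.mul_sum]
          exact Finset.sum_congr rfl fun b _ => by
            rw [starRingEnd_apply, starRingEnd_apply, star_mul']
            ring
      _ = (W *ᵥ v) x * (starRingEnd ℂ) ((W *ᵥ v) y) := by
          simp [Matrix.mulVec, dotProduct]
  -- simplify the difference matrix
  have hD : ((((1:ℂ)/2) • (P₁ ⊗ₖ σ₁) + ((1:ℂ)/2) • (P₂ ⊗ₖ σ₂)) -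
      (W ⊗ₖ (1 : Matrix (Fin d) (Fin d) ℂ)) *
        (((1:ℂ)/2) • (P₁ ⊗ₖ σ₁) + ((1:ℂ)/2) • (P₂ ⊗ₖ σ₂)) *
        (W ⊗ₖ (1 : Matrix (Fin d) (Fin d) ℂ))ᴴ)
      = ((1:ℂ)/2) • ((P₁ - P₂) ⊗ₖ S) := by
    have e1 : (W ⊗ₖ (1 : Matrix (Fin d) (Fin d) ℂ))ᴴ = Wᴴ ⊗ₖ 1 := by
      rw [kron_conjT, conjTranspose_one]
    have e2 : ∀ (P : Matrix (Fin k) (Fin k) ℂ) (σ : Matrix (Fin d) (Fin d) ℂ),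
        (W ⊗ₖ (1 : Matrix (Fin d) (Fin d) ℂ)) * (P ⊗ₖ σ) * (Wᴴ ⊗ₖ 1) = (W * P * Wᴴ) ⊗ₖ σ := by
      intro P σ
      rw [← Matrix.mul_kronecker_mul, ← Matrix.mul_kronecker_mul, Matrix.one_mul, Matrix.mul_one]
    rw [e1, Matrix.mul_add, Matrix.add_mul, Matrix.mul_smul, Matrix.smul_mul,
      Matrix.mul_smul, Matrix.smul_mul, e2, e2, hP₁def, hP₂def, conjW v₁, conjW v₂, hWv₁, hWv₂]
    rw [sub_kron, kron_sub, kron_sub]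
    simp only [smul_sub, smul_add]
    abel
  rw [hD]
  -- compute Dᴴ D
  have hQH : (P₁ - P₂)ᴴ = P₁ - P₂ := by
    rw [conjTranspose_sub]
    congr 1 <;> · ext x y; simp [hP₁def, hP₂def, conjTranspose_apply, mul_comm]
  have hSH : Sᴴ = S := by
    rw [hSdef, conjTranspose_sub, hσ₁.1.eq, hσ₂.1.eq]
  have horth' : ∑ z, (starRingEnd ℂ) (v₂ z) * v₁ z = 0 := by
    have := congrArg (starRingEnd ℂ) horth
    rw [map_sum, map_zero] at this
    rw [← this]
    exact Finset.sum_congr rfl fun z _ => by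
      rw [_root_.map_mul, Complex.conj_conj]; ring
  have hQQ : (P₁ - P₂) * (P₁ - P₂) = P₁ + P₂ := by
    rw [Matrix.sub_mul, Matrix.mul_sub, Matrix.mul_sub, hP₁def, hP₂def,
      prod v₁ v₁, prod v₁ v₂, prod v₂ v₁, prod v₂ v₂, hv₁, hv₂, horth, horth']
    simp only [one_smul, zero_smul, sub_zero, zero_sub, sub_neg_eq_add]
  have hDH : ((((1:ℂ)/2) • ((P₁ - P₂) ⊗ₖ S))ᴴ * (((1:ℂ)/2) • ((P₁ - P₂) ⊗ₖ S)))
      = ((1:ℂ)/4) • ((P₁ + P₂) ⊗ₖ (Sᴴ * S)) := by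
    rw [conjTranspose_smul, kron_conjT, hQH]
    rw [Matrix.smul_mul, Matrix.mul_smul, smul_smul, ← Matrix.mul_kronecker_mul, hQQ]
    congr 1
    simp
    norm_num
  have hApsd : (Sᴴ * S).PosSemidef := Matrix.posSemidef_conjTranspose_mul_self S
  have hP1psd : P₁.PosSemidef := hP₁def ▸ psd_rankOne v₁
  have hP2psd : P₂.PosSemidef := hP₂def ▸ psd_rankOne v₂
  have hmsA : msqrt (Sᴴ * S) = msqrt (Sᴴ * S) := rfl
  set R := ((1:ℂ)/2) • ((P₁ + P₂) ⊗ₖ msqrt (Sᴴ * S)) with hRdef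
  have hRpsd : R.PosSemidef := by
    rw [hRdef]
    exact psd_half (psd_kron (hP1psd.add hP2psd) (hmsA ▸ msqrt_psd hApsd))
  have hQQ2 : (P₁ + P₂) * (P₁ + P₂) = P₁ + P₂ := by
    rw [Matrix.add_mul, Matrix.mul_add, Matrix.mul_add, hP₁def, hP₂def,
      prod v₁ v₁, prod v₁ v₂, prod v₂ v₁, prod v₂ v₂, hv₁, hv₂, horth, horth']
    simp only [one_smul, zero_smul, add_zero, zero_add]
  have hR2 : R * R = ((1:ℂ)/4) • ((P₁ + P₂) ⊗ₖ (Sᴴ * S)) := by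
    rw [hRdef, Matrix.smul_mul, Matrix.mul_smul, smul_smul, ← Matrix.mul_kronecker_mul,
      hQQ2, hmsA, msqrt_mul_self hApsd]
    congr 1
    norm_num
  have key : msqrt ((((1:ℂ)/2) • ((P₁ - P₂) ⊗ₖ S))ᴴ * (((1:ℂ)/2) • ((P₁ - P₂) ⊗ₖ S))) = R := by
    have hpsdDD := Matrix.posSemidef_conjTranspose_mul_self (((1:ℂ)/2) • ((P₁ - P₂) ⊗ₖ S))
    refine msqrt_unique hRpsd hpsdDD ?_
    rw [pow_two, hR2, ← hDH]
  have tr1 : P₁.trace = 1 := by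
    rw [hP₁def, ← hv₁, Matrix.trace]
    exact Finset.sum_congr rfl fun x _ => by
      simp [Matrix.diag, mul_comm]
  have tr2 : P₂.trace = 1 := by
    rw [hP₂def, ← hv₂, Matrix.trace]
    exact Finset.sum_congr rfl fun x _ => by
      simp [Matrix.diag, mul_comm]
  unfold traceNorm
  rw [key, hRdef, Matrix.trace_smul, Matrix.trace_kronecker, Matrix.trace_add, tr1, tr2]
  congr 1
  rw [smul_eq_mul]
  ring
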